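/- Let d ≥ 3 be an integer, δ = ⌊d/2⌋, and let a, r, s be integers with 0 ≤ a < δ (so that a+1 ≤ δ) and 0 ≤ r < s ≤ d−1. Set ã = d+1−a, r̄ = d−r, s̄ = d−s. Then #L(a, a+1; s̄, r̄) + #L(a+1, ã; s̄, r̄) ≤ #L(a, ã−1; s̄, r̄) + #L(ã−1, ã; s̄, r̄), where L(p, q; t, u) denotes the set of pairs of vertex-disjoint NE-lattice paths (P, Q) with P from (0, −p) to (t, −t) and Q from (0, −q) to (u, −u). -/

import Mathlib

/-- An NE-lattice path in `ℤ²`: a nonempty finite sequence of lattice points in which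
each point is obtained from the previous one by a step `N = (0,1)` or a step `E = (1,0)`. -/
def IsNEPath (P : List (ℤ × ℤ)) : Prop :=
  P ≠ [] ∧ P.Chain' (fun x y => y = (x.1, x.2 + 1) ∨ y = (x.1 + 1, x.2))

/-- `P` is an NE-lattice path leading from `A` to `B`. -/
def IsNEPathFromTo (P : List (ℤ × ℤ)) (A B : ℤ × ℤ) : Prop :=
  IsNEPath P ∧ P.head? = some A ∧ P.getLast? = some B

/-- `latticePathPairs p q t u` is the set `L(p, q; t, u)` of pairs `(P, Q)` of
vertex-disjoint NE-lattice paths with `P` from `(0, -p)` to `(t, -t)` and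
`Q` from `(0, -q)` to `(u, -u)`. -/
def latticePathPairs (p q t u : ℤ) : Set (List (ℤ × ℤ) × List (ℤ × ℤ)) :=
  {PQ | IsNEPathFromTo PQ.1 (0, -p) (t, -t) ∧ IsNEPathFromTo PQ.2 (0, -q) (u, -u) ∧
    ∀ x ∈ PQ.1, x ∉ PQ.2}


open Finset Nat

private lemma choose_succ_int (x k : ℕ) :
    ((k:ℤ)+1) * (x.choose (k+1)) = ((x:ℤ) - k) * (x.choose k) := by
  rcases le_or_gt k x with h | h
  · have h1 := Nat.choose_succ_right_eq x k
    have h2 : ((x - k : ℕ) : ℤ) = (x:ℤ) - k := by omega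
    have := congrArg (fun n : ℕ => (n : ℤ)) h1
    push_cast at this
    rw [h2] at this
    linarith
  · rw [Nat.choose_eq_zero_of_lt h, Nat.choose_eq_zero_of_lt (by omega)]
    simp

private lemma core_int (α β γ δ a b : ℤ) (h1 : 0 ≤ α) (h2 : α ≤ β) (h3 : β ≤ δ)
    (h4 : α ≤ γ) (h5 : γ ≤ δ) (h6 : 0 ≤ γ) (h7 : 0 ≤ β) (hab : a ≤ b) (k : ℤ) :
    ((a+1-k)*β + (b-k)*γ) * (α+δ) ≤ ((a-k)*α + (b+1-k)*δ) * (β+γ) := by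
  have p1 : α*β ≤ γ*δ := mul_le_mul h4 h3 h7 h6
  have p2 : α*γ ≤ β*δ := mul_le_mul h2 h5 h6 h7
  nlinarith [p1, mul_nonneg (sub_nonneg.2 hab) (sub_nonneg.2 p2)]

private lemma core_ineq (a b k : ℕ) (hab : a ≤ b) :
    (Nat.choose (a+1) (k+1) + Nat.choose b (k+1)) * (Nat.choose a k + Nat.choose (b+1) k)
      ≤ (Nat.choose a (k+1) + Nat.choose (b+1) (k+1)) * (Nat.choose (a+1) k + Nat.choose b k) := by
  have hk : (0:ℤ) < (k:ℤ) + 1 := by positivity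
  rw [← Nat.cast_le (α := ℤ)]
  push_cast
  rw [← mul_le_mul_iff_right₀ hk]
  have e1 := choose_succ_int a k
  have e2 := choose_succ_int (a+1) k
  have e3 := choose_succ_int b k
  have e4 := choose_succ_int (b+1) k
  push_cast at e2 e4
  have eL : ((k:ℤ)+1) * ((((a+1).choose (k+1) : ℤ) + (b.choose (k+1) : ℤ))
        * ((a.choose k : ℤ) + ((b+1).choose k : ℤ)))
      = (((a:ℤ)+1-k)*((a+1).choose k : ℤ) + ((b:ℤ)-k)*(b.choose k : ℤ))
        * ((a.choose k : ℤ) + ((b+1).choose k : ℤ)) := by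
    linear_combination (((a.choose k : ℤ) + ((b+1).choose k : ℤ))) * e2
      + (((a.choose k : ℤ) + ((b+1).choose k : ℤ))) * e3
  have eR : ((k:ℤ)+1) * (((a.choose (k+1) : ℤ) + ((b+1).choose (k+1) : ℤ))
        * (((a+1).choose k : ℤ) + (b.choose k : ℤ)))
      = (((a:ℤ)-k)*(a.choose k : ℤ) + ((b:ℤ)+1-k)*((b+1).choose k : ℤ))
        * (((a+1).choose k : ℤ) + (b.choose k : ℤ)) := by
    linear_combination ((((a+1).choose k : ℤ) + (b.choose k : ℤ))) * e1
      + ((((a+1).choose k : ℤ) + (b.choose k : ℤ))) * e4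
  rw [eL, eR]
  have hz : ∀ x y : ℕ, x ≤ y → (Nat.choose x k : ℤ) ≤ Nat.choose y k := by
    intro x y h; exact_mod_cast Nat.choose_le_choose k h
  exact core_int _ _ _ _ _ _ (by positivity) (hz _ _ (by omega)) (hz _ _ (by omega))
    (hz _ _ hab) (hz _ _ (by omega)) (by positivity) (by positivity)
    (by exact_mod_cast hab) _

private lemma cross_trans {a1 b1 a2 b2 a3 b3 : ℕ} (h1 : a1*b2 ≤ a2*b1) (h2 : a2*b3 ≤ a3*b2)
    (h0 : a2*b2 = 0 → a1*b3 = 0) : a1*b3 ≤ a3*b1 := by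
  rcases Nat.eq_zero_or_pos (a2*b2) with h | h
  · simp [h0 h]
  · have key : (a1*b3)*(a2*b2) ≤ (a3*b1)*(a2*b2) := by
      calc (a1*b3)*(a2*b2) = (a1*b2)*(a2*b3) := by ring
        _ ≤ (a2*b1)*(a3*b2) := Nat.mul_le_mul h1 h2
        _ = (a3*b1)*(a2*b2) := by ring
    exact Nat.le_of_mul_le_mul_right key h

/-- `S` function : sum of two binomial coefficients. -/
private def Sf (p q k : ℕ) : ℕ := Nat.choose p k + Nat.choose q k

private lemma Sf_zero {p q k l : ℕ} (hpq : p ≤ q) (hkl : k ≤ l) (h : Sf p q k = 0) :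
    Sf p q l = 0 := by
  unfold Sf at h ⊢
  have h1 : q < k := Nat.choose_eq_zero_iff.mp (by omega)
  rw [Nat.choose_eq_zero_of_lt (by omega), Nat.choose_eq_zero_of_lt (by omega)]

private lemma chainI (m m' k : ℕ) (hmm : m ≤ m') : ∀ j, j ≤ m →
    Sf m m' (k+1) * Sf (m-j) (m'+j) k ≤ Sf (m-j) (m'+j) (k+1) * Sf m m' k := by
  intro j
  induction j with
  | zero => intro _; simp [Nat.mul_comm]
  | succ j ih =>
    intro hj
    have ihh := ih (by omega)
    -- core at (a, b) = (m-j-1, m'+j) ; note m-(j+1) = a, (m-j) = a+1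
    have hcore := core_ineq (m-(j+1)) (m'+j) k (by omega)
    have ha1 : m-(j+1)+1 = m-j := by omega
    rw [ha1] at hcore
    -- hcore : Sf (m-j) (m'+j) (k+1) * Sf (m-(j+1)) (m'+j+1) k
    --           ≤ Sf (m-(j+1)) (m'+j+1) (k+1) * Sf (m-j) (m'+j) k
    have hcore' : Sf (m-j) (m'+j) (k+1) * Sf (m-(j+1)) (m'+(j+1)) k
        ≤ Sf (m-(j+1)) (m'+(j+1)) (k+1) * Sf (m-j) (m'+j) k := by
      unfold Sf
      convert hcore using 4 <;> omega
    refine cross_trans ihh hcore' ?_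
    intro h
    rcases Nat.mul_eq_zero.mp h with h | h
    · have : m' < k + 1 := by
        have := Nat.choose_eq_zero_iff.mp (show Nat.choose (m'+j) (k+1) = 0 by
          unfold Sf at h; omega)
        omega
      have : Sf m m' (k+1) = 0 := by
        unfold Sf
        rw [Nat.choose_eq_zero_of_lt (by omega), Nat.choose_eq_zero_of_lt (by omega)]
      simp [this]
    · have : m' < k := by
        have := Nat.choose_eq_zero_iff.mp (show Nat.choose (m'+j) k = 0 by
          unfold Sf at h; omega)
        omega
      have : Sf m m' (k+1) = 0 := by
        unfold Sf
        rw [Nat.choose_eq_zero_of_lt (by omega), Nat.choose_eq_zero_of_lt (by omega)]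
      simp [this]

private lemma lemB_aux (m m' j t : ℕ) (hmm : m ≤ m') (hj : j ≤ m) : ∀ u, t ≤ u →
    Sf m m' u * Sf (m-j) (m'+j) t ≤ Sf (m-j) (m'+j) u * Sf m m' t := by
  intro u
  induction u with
  | zero => intro h; interval_cases t; simp [Nat.mul_comm]
  | succ u ih =>
    intro htu
    rcases Nat.lt_or_ge t (u+1) with h | h
    · have ihh := ih (by omega)
      have hcI := chainI m m' u hmm j hj
      have h1' : Sf m m' (u+1) * Sf (m-j) (m'+j) u ≤ Sf m m' u * Sf (m-j) (m'+j) (u+1) :=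
        hcI.trans_eq (Nat.mul_comm _ _)
      have h2' : Sf m m' u * Sf (m-j) (m'+j) t ≤ Sf m m' t * Sf (m-j) (m'+j) u :=
        ihh.trans_eq (Nat.mul_comm _ _)
      have h0 : Sf m m' u * Sf (m-j) (m'+j) u = 0 → Sf m m' (u+1) * Sf (m-j) (m'+j) t = 0 := by
        intro h0
        rcases Nat.mul_eq_zero.mp h0 with h0 | h0
        · have := Sf_zero hmm (show u ≤ u+1 by omega) h0
          simp [this]
        · have h1 : Sf (m-j) (m'+j) u = 0 := h0
          have : m' + j < u := Nat.choose_eq_zero_iff.mp (by unfold Sf at h1; omega)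
          have : Sf m m' (u+1) = 0 := by
            unfold Sf
            rw [Nat.choose_eq_zero_of_lt (by omega), Nat.choose_eq_zero_of_lt (by omega)]
          simp [this]
      exact (cross_trans h1' h2' h0).trans_eq (Nat.mul_comm _ _)
    · have : t = u + 1 := by omega
      subst this
      simp [Nat.mul_comm]

private lemma lemB (a b m m' t u : ℕ) (h1 : a ≤ m) (h2 : m ≤ m') (h3 : m + m' = a + b)
    (htu : t ≤ u) :
    (Nat.choose m u + Nat.choose m' u) * (Nat.choose a t + Nat.choose b t)
      ≤ (Nat.choose a u + Nat.choose b u) * (Nat.choose m t + Nat.choose m' t) := by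
  have key := lemB_aux m m' (m - a) t h2 (by omega) u htu
  have e1 : m - (m - a) = a := by omega
  have e2 : m' + (m - a) = b := by omega
  rw [e1, e2] at key
  exact key

private lemma choose_sub_eq_sum (k : ℕ) : ∀ {a b : ℕ}, a ≤ b →
    Nat.choose a (k+1) + ∑ n ∈ Ico a b, Nat.choose n k = Nat.choose b (k+1) := by
  intro a b hab
  induction b, hab using Nat.le_induction with
  | base => simp
  | succ b hab ih =>
    rw [Finset.sum_Ico_succ_top hab, Nat.choose_succ_succ' b k]
    omega

private lemma reflect_sum (a b : ℕ) (F : ℕ → ℕ) :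
    ∑ m ∈ Ico (a+1) b, F (a+b-m) = ∑ m ∈ Ico (a+1) b, F m := by
  rcases Nat.lt_or_ge (a+1) b with h | h
  · apply Finset.sum_nbij' (i := fun m => a+b-m) (j := fun m => a+b-m)
    all_goals intro x hx
    all_goals simp only [Finset.mem_Ico] at *
    all_goals first
      | omega
      | (congr 1; omega)
      | rfl
  · rw [Finset.Ico_eq_empty (by omega)]
    simp

private lemma key_sum_ineq (a b t u : ℕ) (hab : a+1 ≤ b) (htu : t ≤ u) :
    (∑ n ∈ Ico (a+1) b, Nat.choose n u) * (Nat.choose a t + Nat.choose b t)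
      ≤ (∑ n ∈ Ico (a+1) b, Nat.choose n t) * (Nat.choose a u + Nat.choose b u) := by
  have h2 : 2 * ((∑ n ∈ Ico (a+1) b, Nat.choose n u) * (Nat.choose a t + Nat.choose b t))
      ≤ 2 * ((∑ n ∈ Ico (a+1) b, Nat.choose n t) * (Nat.choose a u + Nat.choose b u)) := by
    have eL : 2 * ((∑ n ∈ Ico (a+1) b, Nat.choose n u) * (Nat.choose a t + Nat.choose b t))
        = ∑ m ∈ Ico (a+1) b, ((Nat.choose m u + Nat.choose (a+b-m) u)
            * (Nat.choose a t + Nat.choose b t)) := by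
      simp only [add_mul]
      rw [Finset.sum_add_distrib, ← Finset.sum_mul, ← Finset.sum_mul,
        reflect_sum a b (fun n => Nat.choose n u)]
      ring
    have eR : 2 * ((∑ n ∈ Ico (a+1) b, Nat.choose n t) * (Nat.choose a u + Nat.choose b u))
        = ∑ m ∈ Ico (a+1) b, ((Nat.choose m t + Nat.choose (a+b-m) t)
            * (Nat.choose a u + Nat.choose b u)) := by
      simp only [add_mul]
      rw [Finset.sum_add_distrib, ← Finset.sum_mul, ← Finset.sum_mul,
        reflect_sum a b (fun n => Nat.choose n t)]
      ring
    rw [eL, eR]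
    apply Finset.sum_le_sum
    intro m hm
    simp only [Finset.mem_Ico] at hm
    rcases le_or_gt m (a+b-m) with h | h
    · exact (lemB a b m (a+b-m) t u (by omega) h (by omega) htu).trans_eq
        (Nat.mul_comm _ _)
    · have := lemB a b (a+b-m) m t u (by omega) (by omega) (by omega) htu
      calc (Nat.choose m u + Nat.choose (a+b-m) u) * (Nat.choose a t + Nat.choose b t)
          = (Nat.choose (a+b-m) u + Nat.choose m u) * (Nat.choose a t + Nat.choose b t) := by
            ring
        _ ≤ (Nat.choose a u + Nat.choose b u) * (Nat.choose (a+b-m) t + Nat.choose m t) := this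
        _ = (Nat.choose m t + Nat.choose (a+b-m) t) * (Nat.choose a u + Nat.choose b u) := by
            ring
  omega

private lemma sum_ineq (a b t u : ℕ) (hab : a+1 ≤ b) (htu : t ≤ u) :
    (∑ n ∈ Ico (a+1) b, Nat.choose n u) * (∑ n ∈ Ico a (b+1), Nat.choose n t)
      ≤ (∑ n ∈ Ico (a+1) b, Nat.choose n t) * (∑ n ∈ Ico a (b+1), Nat.choose n u) := by
  have expand : ∀ v : ℕ, ∑ n ∈ Ico a (b+1), Nat.choose n v
      = Nat.choose a v + (∑ n ∈ Ico (a+1) b, Nat.choose n v) + Nat.choose b v := by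
    intro v
    rw [Finset.sum_Ico_succ_top (by omega), Finset.sum_eq_sum_Ico_succ_bot (by omega)]
  rw [expand t, expand u]
  have := key_sum_ineq a b t u hab htu
  nlinarith [this]

/-- The main binomial inequality, in `ℤ`. -/
private lemma main_ineq (a b T U : ℕ) (hab : a+1 ≤ b) (hT : 1 ≤ T) (hTU : T ≤ U) :
    ((Nat.choose b U : ℤ) - Nat.choose (a+1) U) * ((Nat.choose (b+1) T : ℤ) - Nat.choose a T)
      ≤ ((Nat.choose b T : ℤ) - Nat.choose (a+1) T)
        * ((Nat.choose (b+1) U : ℤ) - Nat.choose a U) := by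
  obtain ⟨t, rfl⟩ : ∃ t, T = t + 1 := ⟨T - 1, by omega⟩
  obtain ⟨u, rfl⟩ : ∃ u, U = u + 1 := ⟨U - 1, by omega⟩
  have htu : t ≤ u := by omega
  have d1 : ((Nat.choose b (t+1) : ℤ) - Nat.choose (a+1) (t+1))
      = ((∑ n ∈ Ico (a+1) b, Nat.choose n t : ℕ) : ℤ) := by
    have := choose_sub_eq_sum t (show a+1 ≤ b by omega)
    push_cast [← this]
    ring
  have d2 : ((Nat.choose b (u+1) : ℤ) - Nat.choose (a+1) (u+1))
      = ((∑ n ∈ Ico (a+1) b, Nat.choose n u : ℕ) : ℤ) := by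
    have := choose_sub_eq_sum u (show a+1 ≤ b by omega)
    push_cast [← this]
    ring
  have d3 : ((Nat.choose (b+1) (t+1) : ℤ) - Nat.choose a (t+1))
      = ((∑ n ∈ Ico a (b+1), Nat.choose n t : ℕ) : ℤ) := by
    have := choose_sub_eq_sum t (show a ≤ b+1 by omega)
    push_cast [← this]
    ring
  have d4 : ((Nat.choose (b+1) (u+1) : ℤ) - Nat.choose a (u+1))
      = ((∑ n ∈ Ico a (b+1), Nat.choose n u : ℕ) : ℤ) := by
    have := choose_sub_eq_sum u (show a ≤ b+1 by omega)
    push_cast [← this]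
    ring
  rw [d1, d2, d3, d4]
  exact_mod_cast sum_ineq a b t u hab htu

namespace LGVAux

abbrev Pt := ℤ × ℤ

abbrev SRel : Pt → Pt → Prop := fun x y => y = (x.1, x.2 + 1) ∨ y = (x.1 + 1, x.2)

/-- The set of NE-paths from `A` to `B`. -/
def pathSet (A B : Pt) : Set (List Pt) := {P | IsNEPathFromTo P A B}

lemma fromTo_ne_nil {P : List Pt} {A B : Pt} (h : IsNEPathFromTo P A B) : P ≠ [] := h.1.1

lemma fromTo_chain {P : List Pt} {A B : Pt} (h : IsNEPathFromTo P A B) : P.Chain' SRel := h.1.2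

lemma fromTo_length_pos {P : List Pt} {A B : Pt} (h : IsNEPathFromTo P A B) : 0 < P.length :=
  List.length_pos_iff.mpr (fromTo_ne_nil h)

lemma fromTo_getElem_zero {P : List Pt} {A B : Pt} (h : IsNEPathFromTo P A B)
    (h0 : 0 < P.length) : P[0] = A := by
  have := h.2.1
  rw [List.head?_eq_head (fromTo_ne_nil h)] at this
  rw [List.getElem_zero h0]
  exact Option.some_injective _ this

lemma fromTo_getElem_last {P : List Pt} {A B : Pt} (h : IsNEPathFromTo P A B)
    (hl : P.length - 1 < P.length) : P[P.length - 1] = B := by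
  have := h.2.2
  rw [List.getLast?_eq_getLast (fromTo_ne_nil h)] at this
  have h2 := List.getLast_eq_getElem (fromTo_ne_nil h)
  rw [h2] at this
  exact Option.some_injective _ this

lemma chain_step {P : List Pt} (hc : P.Chain' SRel) {i : ℕ} (hi : i + 1 < P.length) :
    SRel (P[i]'(by omega)) (P[i+1]'hi) := by
  have := List.isChain_iff_getElem.mp hc i (by omega)
  simpa [List.get_eq_getElem] using this

lemma sum_getElem {P : List Pt} {A B : Pt} (h : IsNEPathFromTo P A B) :
    ∀ i, (hi : i < P.length) → P[i].1 + P[i].2 = A.1 + A.2 + i := by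
  intro i
  induction i with
  | zero =>
    intro hi
    rw [fromTo_getElem_zero h hi]
    simp
  | succ i ih =>
    intro hi
    have h1 := ih (by omega)
    have h2 := chain_step (fromTo_chain h) hi
    rcases h2 with h2 | h2 <;> rw [h2] <;> simp <;> omega

lemma x_step {P : List Pt} (hc : P.Chain' SRel) {i : ℕ} (hi : i + 1 < P.length) :
    (P[i]'(by omega)).1 ≤ (P[i+1]'hi).1 ∧ (P[i+1]'hi).1 ≤ (P[i]'(by omega)).1 + 1 := by
  rcases chain_step hc hi with h | h <;> rw [h] <;> simp

lemma x_mono {P : List Pt} (hc : P.Chain' SRel) :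
    ∀ i i' (hle : i ≤ i') (hi' : i' < P.length), (P[i]'(by omega)).1 ≤ P[i'].1 := by
  intro i i' hle
  induction i', hle using Nat.le_induction with
  | base => intro _; exact le_refl _
  | succ i' hle ih =>
    intro hi'
    exact le_trans (ih (by omega)) (x_step hc hi').1

lemma y_step {P : List Pt} (hc : P.Chain' SRel) {i : ℕ} (hi : i + 1 < P.length) :
    (P[i]'(by omega)).2 ≤ (P[i+1]'hi).2 := by
  rcases chain_step hc hi with h | h <;> rw [h] <;> simp

lemma y_mono {P : List Pt} (hc : P.Chain' SRel) :
    ∀ i i' (hle : i ≤ i') (hi' : i' < P.length), (P[i]'(by omega)).2 ≤ P[i'].2 := by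
  intro i i' hle
  induction i', hle using Nat.le_induction with
  | base => intro _; exact le_refl _
  | succ i' hle ih =>
    intro hi'
    exact le_trans (ih (by omega)) (y_step hc hi')

lemma mem_bounds {P : List Pt} {A B : Pt} (h : IsNEPathFromTo P A B) {z : Pt} (hz : z ∈ P) :
    A.1 ≤ z.1 ∧ A.2 ≤ z.2 ∧ z.1 ≤ B.1 ∧ z.2 ≤ B.2 := by
  obtain ⟨i, hi, rfl⟩ := List.mem_iff_getElem.mp hz
  have h0 : 0 < P.length := by omega
  have hl : P.length - 1 < P.length := by omega
  have hx1 := x_mono (fromTo_chain h) 0 i (Nat.zero_le _) hi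
  have hy1 := y_mono (fromTo_chain h) 0 i (Nat.zero_le _) hi
  have hile : i ≤ P.length - 1 := by omega
  have hx2 := x_mono (fromTo_chain h) i (P.length - 1) hile hl
  have hy2 := y_mono (fromTo_chain h) i (P.length - 1) hile hl
  rw [fromTo_getElem_zero h h0] at hx1 hy1
  rw [fromTo_getElem_last h hl] at hx2 hy2
  exact ⟨hx1, hy1, hx2, hy2⟩

lemma fromTo_length {P : List Pt} {A B : Pt} (h : IsNEPathFromTo P A B) :
    (P.length : ℤ) = B.1 + B.2 - A.1 - A.2 + 1 := by
  have hl : P.length - 1 < P.length := by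
    have := fromTo_length_pos h
    omega
  have := sum_getElem h (P.length - 1) hl
  rw [fromTo_getElem_last h hl] at this
  have hlen : ((P.length - 1 : ℕ) : ℤ) = (P.length : ℤ) - 1 := by
    have := fromTo_length_pos h
    omega
  omega

end LGVAux

namespace LGVAux

lemma pathSet_empty {A B : Pt} (h : ¬ (A.1 ≤ B.1 ∧ A.2 ≤ B.2)) : pathSet A B = ∅ := by
  ext P
  simp only [pathSet, Set.mem_setOf_eq, Set.mem_empty_iff_false, iff_false]
  intro hP
  have hl : P.length - 1 < P.length := by
    have := fromTo_length_pos hP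
    omega
  have hB : B ∈ P := by
    rw [← fromTo_getElem_last hP hl]
    exact List.getElem_mem _
  have := mem_bounds hP hB
  exact h ⟨this.1, this.2.1⟩

lemma pathSet_single (A : Pt) : pathSet A A = {[A]} := by
  ext P
  simp only [pathSet, Set.mem_setOf_eq, Set.mem_singleton_iff]
  constructor
  · intro hP
    have hlen := fromTo_length hP
    have : P.length = 1 := by omega
    obtain ⟨a, rfl⟩ := List.length_eq_one_iff.mp this
    have := fromTo_getElem_zero hP (by simp)
    simpa using congrArg (fun z => [z]) this
  · rintro rfl
    refine ⟨⟨by simp, by simp [List.Chain']⟩, by simp, by simp⟩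

lemma pathSet_split {A B : Pt} (h : A ≠ B) :
    pathSet A B = (List.cons A '' pathSet (A.1, A.2+1) B) ∪
      (List.cons A '' pathSet (A.1+1, A.2) B) := by
  ext P
  simp only [pathSet, Set.mem_setOf_eq, Set.mem_union, Set.mem_image]
  constructor
  · intro hP
    obtain ⟨P, rfl⟩ : ∃ rest, P = A :: rest := by
      cases P with
      | nil => exact absurd rfl (fromTo_ne_nil hP)
      | cons a rest =>
        have := hP.2.1
        simp at this
        exact ⟨rest, by rw [this]⟩
    cases P with
    | nil =>
      exfalso
      apply h
      have := hP.2.2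
      simp at this
      exact this.symm ▸ rfl
    | cons z rest =>
      have hc := fromTo_chain hP
      rw [List.Chain', List.isChain_cons_cons] at hc
      have hrest : IsNEPathFromTo (z :: rest) z B := by
        refine ⟨⟨by simp, hc.2⟩, by simp, ?_⟩
        have := hP.2.2
        rwa [List.getLast?_cons_cons] at this
      rcases hc.1 with h1 | h1
      · left; exact ⟨z :: rest, h1 ▸ hrest, rfl⟩
      · right; exact ⟨z :: rest, h1 ▸ hrest, rfl⟩
  · rintro (⟨P', hP', rfl⟩ | ⟨P', hP', rfl⟩) <;>
    · obtain ⟨⟨hne, hch⟩, hh, hl⟩ := hP'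
      obtain ⟨y0, tl, rfl⟩ := List.exists_cons_of_ne_nil hne
      simp only [List.head?_cons, Option.some.injEq] at hh
      subst hh
      refine ⟨⟨by simp, ?_⟩, by simp,
        by rw [List.getLast?_cons_cons]; exact hl⟩
      rw [List.Chain', List.isChain_cons_cons]
      exact ⟨by simp [SRel], hch⟩

lemma pathSet_finite (A B : Pt) : (pathSet A B).Finite := by
  suffices H : ∀ n : ℕ, ∀ A B : Pt, (B.1 + B.2 - A.1 - A.2).toNat ≤ n → (pathSet A B).Finite by
    exact H (B.1 + B.2 - A.1 - A.2).toNat A B le_rfl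
  intro n
  induction n with
  | zero =>
    intro A B hn
    by_cases hAB : A = B
    · subst hAB; rw [pathSet_single]; exact Set.finite_singleton _
    · convert Set.finite_empty
      ext P
      simp only [pathSet, Set.mem_setOf_eq, Set.mem_empty_iff_false, iff_false]
      intro hP
      have h1 := fromTo_length hP
      have h2 : 2 ≤ P.length := by
        rcases P with _ | ⟨a, _ | ⟨b, l⟩⟩
        · exact absurd rfl (fromTo_ne_nil hP)
        · exfalso
          apply hAB
          have hh := hP.2.1
          have hl := hP.2.2
          simp at hh hl
          simp_all
        · simp only [List.length_cons]
          omega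
      omega
  | succ n ih =>
    intro A B hn
    by_cases hAB : A = B
    · subst hAB; rw [pathSet_single]; exact Set.finite_singleton _
    · rw [pathSet_split hAB]
      refine Set.Finite.union (Set.Finite.image _ (ih _ _ ?_)) (Set.Finite.image _ (ih _ _ ?_))
      · simp only []
        omega
      · simp only []
        omega

end LGVAux

namespace LGVAux

lemma pathSet_ncard : ∀ n : ℕ, ∀ A B : Pt, B.1 + B.2 - A.1 - A.2 = (n : ℤ) →
    A.1 ≤ B.1 → A.2 ≤ B.2 →
    (pathSet A B).ncard = Nat.choose n (B.1 - A.1).toNat := by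
  intro n
  induction n with
  | zero =>
    intro A B hn h1 h2
    have hAB : A = B := by
      have e1 : A.1 = B.1 := by omega
      have e2 : A.2 = B.2 := by omega
      exact Prod.ext e1 e2
    subst hAB
    rw [pathSet_single]
    simp only [Set.ncard_singleton]
    have : (A.1 - A.1).toNat = 0 := by omega
    rw [this]
    rfl
  | succ n ih =>
    intro A B hn h1 h2
    have hAB : A ≠ B := by
      intro h
      subst h
      omega
    rw [pathSet_split hAB]
    have hinj : Function.Injective (List.cons A) := fun x y h => by
      simpa using h
    have hfin1 : ((List.cons A) '' pathSet (A.1, A.2+1) B).Finite :=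
      Set.Finite.image _ (pathSet_finite _ _)
    have hfin2 : ((List.cons A) '' pathSet (A.1+1, A.2) B).Finite :=
      Set.Finite.image _ (pathSet_finite _ _)
    have hdisj : Disjoint ((List.cons A) '' pathSet (A.1, A.2+1) B)
        ((List.cons A) '' pathSet (A.1+1, A.2) B) := by
      rw [Set.disjoint_left]
      rintro P ⟨P1, hP1, rfl⟩ ⟨P2, hP2, hP2e⟩
      have : P2 = P1 := by simpa using hP2e
      subst this
      have e1 := hP1.2.1
      have e2 := hP2.2.1
      rw [e1] at e2
      simp only [Option.some.injEq, Prod.mk.injEq] at e2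
      omega
    rw [Set.ncard_union_eq hdisj hfin1 hfin2,
      Set.ncard_image_of_injective _ hinj, Set.ncard_image_of_injective _ hinj]
    by_cases hx : A.1 = B.1
    · have hE : pathSet (A.1+1, A.2) B = ∅ := by
        apply pathSet_empty
        rw [not_and]
        intro h
        omega
      have hN := ih (A.1, A.2+1) B (by omega) (by omega) (by omega)
      rw [hE, hN]
      have e0 : (B.1 - (A.1, A.2+1).1).toNat = 0 := by omega
      rw [e0]
      simp
    · by_cases hy : A.2 = B.2
      · have hN : pathSet (A.1, A.2+1) B = ∅ := by
          apply pathSet_empty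
          rw [not_and]
          intro h
          omega
        have hE := ih (A.1+1, A.2) B (by omega) (by omega) (by omega)
        rw [hN, hE]
        have e1 : (B.1 - (A.1+1, A.2).1).toNat = n := by omega
        have e2 : (B.1 - A.1).toNat = n + 1 := by omega
        rw [e1, e2]
        simp [Nat.choose_self]
      · have hN := ih (A.1, A.2+1) B (by omega) (by omega) (by omega)
        have hE := ih (A.1+1, A.2) B (by omega) (by omega) (by omega)
        rw [hN, hE]
        obtain ⟨k, hk⟩ : ∃ k : ℕ, (B.1 - A.1).toNat = k + 1 := ⟨(B.1 - A.1).toNat - 1, by omega⟩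
        have e1 : (B.1 - (A.1+1, A.2).1).toNat = k := by omega
        have e2 : (B.1 - (A.1, A.2+1).1).toNat = k + 1 := by omega
        rw [e1, e2, Nat.choose_succ_succ']
        omega

/-- The number of NE-paths from `(0,-p)` to `(T,-T)` is `C(p,T)`. -/
lemma pathSet_count (p T : ℕ) :
    (pathSet ((0 : ℤ), -(p:ℤ)) ((T:ℤ), -(T:ℤ))).ncard = Nat.choose p T := by
  by_cases hTp : T ≤ p
  · have := pathSet_ncard p ((0:ℤ), -(p:ℤ)) ((T:ℤ), -(T:ℤ))
      (by omega) (by omega) (by omega)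
    rw [this]
    congr 1
  · rw [pathSet_empty ?_, Nat.choose_eq_zero_of_lt (by omega), Set.ncard_empty]
    rw [not_and]
    intro h
    omega

end LGVAux

namespace LGVAux

lemma ivt (f : ℕ → ℤ) (n : ℕ) (h0 : f 0 ≤ 0) (hn : 0 < f n)
    (hstep : ∀ i, i < n → f (i+1) ≤ f i + 1) : ∃ i, i ≤ n ∧ f i = 0 := by
  by_contra hcon
  push_neg at hcon
  have key : ∀ i, i ≤ n → f i ≤ 0 := by
    intro i
    induction i with
    | zero => intro _; exact h0
    | succ i ih =>
      intro hi
      have k1 := ih (by omega)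
      have k2 := hstep i (by omega)
      have k3 := hcon i (by omega)
      have k4 := hcon (i+1) hi
      omega
  have := key n le_rfl
  omega

lemma must_meet {P Q : List Pt} {p q T U : ℕ}
    (hp : IsNEPathFromTo P ((0:ℤ), -(p:ℤ)) ((U:ℤ), -(U:ℤ)))
    (hq : IsNEPathFromTo Q ((0:ℤ), -(q:ℤ)) ((T:ℤ), -(T:ℤ)))
    (hpq : p < q) (hTU : T < U) : ∃ z, z ∈ P ∧ z ∈ Q := by
  have lenP : P.length = p + 1 := by
    have := fromTo_length hp
    omega
  have lenQ : Q.length = q + 1 := by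
    have := fromTo_length hq
    omega
  set d : ℕ := q - p with hd
  set f : ℕ → ℤ := fun i => (P.getD i ((0:ℤ),(0:ℤ))).1 - (Q.getD (i + d) ((0:ℤ),(0:ℤ))).1
    with hf
  have hgP : ∀ i (h : i < P.length), P.getD i ((0:ℤ),(0:ℤ)) = P[i] :=
    fun i h => List.getD_eq_getElem P _ h
  have hgQ : ∀ i (h : i < Q.length), Q.getD i ((0:ℤ),(0:ℤ)) = Q[i] :=
    fun i h => List.getD_eq_getElem Q _ h
  have h0 : f 0 ≤ 0 := by
    have e1 : P.getD 0 ((0:ℤ),(0:ℤ)) = ((0:ℤ), -(p:ℤ)) := by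
      rw [hgP 0 (by omega)]
      exact fromTo_getElem_zero hp (by omega)
    have e2 : (0:ℤ) ≤ (Q.getD (0 + d) ((0:ℤ),(0:ℤ))).1 := by
      rw [hgQ (0 + d) (by omega)]
      exact (mem_bounds hq (List.getElem_mem (by omega : 0 + d < Q.length))).1
    simp only [hf, e1]
    omega
  have hn : 0 < f p := by
    have e1 : P.getD p ((0:ℤ),(0:ℤ)) = ((U:ℤ), -(U:ℤ)) := by
      rw [show p = P.length - 1 by omega, hgP _ (by omega)]
      exact fromTo_getElem_last hp (by omega)
    have e2 : Q.getD (p + d) ((0:ℤ),(0:ℤ)) = ((T:ℤ), -(T:ℤ)) := by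
      rw [show p + d = Q.length - 1 by omega, hgQ _ (by omega)]
      exact fromTo_getElem_last hq (by omega)
    simp only [hf, e1, e2]
    omega
  have hstep : ∀ i, i < p → f (i+1) ≤ f i + 1 := by
    intro i hi
    have hip : i + 1 < P.length := by omega
    have hiq : (i + d) + 1 < Q.length := by omega
    have s1 := (x_step (fromTo_chain hp) hip).2
    have s2 := (x_step (fromTo_chain hq) hiq).1
    show (P.getD (i+1) ((0:ℤ),(0:ℤ))).1 - (Q.getD ((i+1) + d) ((0:ℤ),(0:ℤ))).1
      ≤ (P.getD i ((0:ℤ),(0:ℤ))).1 - (Q.getD (i + d) ((0:ℤ),(0:ℤ))).1 + 1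
    rw [show (i+1)+d = (i+d)+1 by omega]
    rw [hgP (i+1) hip, hgP i (by omega), hgQ ((i+d)+1) hiq, hgQ (i+d) (by omega)]
    omega
  obtain ⟨i, hi, hfi⟩ := ivt f p h0 hn hstep
  refine ⟨P[i]'(by omega), List.getElem_mem _, ?_⟩
  have hx : (P[i]'(by omega)).1 = (Q[i+d]'(by omega)).1 := by
    have := hfi
    simp only [hf] at this
    rw [hgP i (by omega), hgQ (i+d) (by omega)] at this
    omega
  have hy : (P[i]'(by omega)).2 = (Q[i+d]'(by omega)).2 := by
    have s1 := sum_getElem hp i (by omega)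
    have s2 := sum_getElem hq (i+d) (by omega)
    omega
  have : P[i]'(by omega) = Q[i+d]'(by omega) := Prod.ext hx hy
  rw [this]
  exact List.getElem_mem _

end LGVAux

namespace LGVAux

/-- Tail-swap of a pair of paths at the first vertex of the first path lying on the second. -/
def swapPair (PQ : List Pt × List Pt) : List Pt × List Pt :=
  let P := PQ.1
  let Q := PQ.2
  let i := P.findIdx (fun z => decide (z ∈ Q))
  let x := P.getD i ((0:ℤ),(0:ℤ))
  let j := Q.findIdx (fun z => decide (z = x))
  (P.take i ++ Q.drop j, Q.take j ++ P.drop i)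

lemma getLast?_append_right {l l' : List Pt} (h : l' ≠ []) :
    (l ++ l').getLast? = l'.getLast? := by
  rw [List.getLast?_append, List.getLast?_eq_getLast h]
  rfl

lemma getLast?_drop_of_lt {Q : List Pt} {j : ℕ} (hj : j < Q.length) :
    (Q.drop j).getLast? = Q.getLast? := by
  have hne : Q.drop j ≠ [] := by
    intro h
    have := congrArg List.length h
    rw [List.length_drop] at this
    simp only [List.length_nil] at this
    omega
  conv_rhs => rw [← List.take_append_drop j Q]
  rw [getLast?_append_right hne]

theorem swap_spec {P Q : List Pt} {A B C D : Pt}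
    (hP : IsNEPathFromTo P A B) (hQ : IsNEPathFromTo Q C D)
    (hmeet : ∃ z, z ∈ P ∧ z ∈ Q) :
    IsNEPathFromTo (swapPair (P,Q)).1 A D ∧ IsNEPathFromTo (swapPair (P,Q)).2 C B ∧
    (∃ z, z ∈ (swapPair (P,Q)).1 ∧ z ∈ (swapPair (P,Q)).2) ∧
    swapPair (swapPair (P,Q)) = (P, Q) := by
  obtain ⟨z0, hz0P, hz0Q⟩ := hmeet
  set i := P.findIdx (fun z => decide (z ∈ Q)) with hidef
  have hi : i < P.length :=
    List.findIdx_lt_length_of_exists ⟨z0, hz0P, by simpa using hz0Q⟩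
  set x := P.getD i ((0:ℤ),(0:ℤ)) with hxdef
  have hx : x = P[i]'hi := List.getD_eq_getElem P _ hi
  have hxQ : x ∈ Q := by
    have := @List.findIdx_getElem _ (fun z => decide (z ∈ Q)) P hi
    rw [hx]
    simpa using this
  have hmin : ∀ k, (hk : k < i) → (P[k]'(by omega)) ∉ Q := by
    intro k hk
    have := @List.not_of_lt_findIdx _ (fun z => decide (z ∈ Q)) P k hk
    simpa using this
  set j := Q.findIdx (fun z => decide (z = x)) with hjdef
  have hj : j < Q.length :=
    List.findIdx_lt_length_of_exists ⟨x, hxQ, by simp⟩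
  have hQj : Q[j]'hj = x := by
    have := @List.findIdx_getElem _ (fun z => decide (z = x)) Q hj
    simpa using this
  have hminQ : ∀ k, (hk : k < j) → (Q[k]'(by omega)) ≠ x := by
    intro k hk
    have := @List.not_of_lt_findIdx _ (fun z => decide (z = x)) Q k hk
    simpa using this
  have eswap : swapPair (P, Q) = (P.take i ++ Q.drop j, Q.take j ++ P.drop i) := rfl
  have dQd : Q.drop j = x :: Q.drop (j+1) := by
    rw [List.drop_eq_getElem_cons hj, hQj]
  have dPd : P.drop i = x :: P.drop (i+1) := by
    rw [List.drop_eq_getElem_cons hi, hx]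
  have hQdne : Q.drop j ≠ [] := by rw [dQd]; simp
  have hPdne : P.drop i ≠ [] := by rw [dPd]; simp
  have ltake : (P.take i).length = i := by
    rw [List.length_take]
    omega
  have ltakeQ : (Q.take j).length = j := by
    rw [List.length_take]
    omega
  -- the two swapped lists are NE-paths with swapped endpoints
  have hP' : IsNEPathFromTo (P.take i ++ Q.drop j) A D := by
    refine ⟨⟨by simp [hQdne], ?_⟩, ?_, ?_⟩
    · rw [List.Chain', List.isChain_append]
      refine ⟨List.IsChain.take (fromTo_chain hP) i, List.IsChain.drop (fromTo_chain hQ) j, ?_⟩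
      intro a ha b hb
      rcases Nat.eq_zero_or_pos i with hi0 | hi0
      · rw [hi0] at ha
        simp at ha
      · have hne : P.take i ≠ [] := by
          intro h
          rw [h] at ltake
          simp at ltake
          omega
        rw [List.getLast?_eq_getLast hne, List.getLast_eq_getElem] at ha
        simp only [Option.mem_def, Option.some.injEq] at ha
        rw [dQd] at hb
        simp only [List.head?_cons, Option.mem_def, Option.some.injEq] at hb
        have e1 : (P.take i)[(P.take i).length - 1]'(by omega) = P[i-1]'(by omega) := by
          rw [List.getElem_take]
          congr 1
          omega
        have hstep := chain_step (fromTo_chain hP) (show (i-1)+1 < P.length by omega)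
        have e2 : P[(i-1)+1]'(by omega) = P[i]'hi := by
          congr 1
          omega
        rw [← ha, e1, ← hb, hx]
        rw [e2] at hstep
        exact hstep
    · rcases Nat.eq_zero_or_pos i with hi0 | hi0
      · have : P.take i = [] := by rw [hi0]; simp
        rw [this, List.nil_append, dQd]
        simp only [List.head?_cons]
        have : x = A := by
          rw [hx]
          have := fromTo_getElem_zero hP (by omega)
          rw [← this]
          congr 1
        rw [this]
      · have hne : P.take i ≠ [] := by
          intro h
          rw [h] at ltake
          simp at ltake
          omega
        rw [List.head?_append_of_ne_nil _ hne]
        rw [List.head?_eq_head hne]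
        have : (P.take i).head hne = (P.take i)[0]'(by omega) := by
          rw [List.getElem_zero]
        rw [this]
        have : (P.take i)[0]'(by omega) = P[0]'(by omega) := List.getElem_take
        rw [this, fromTo_getElem_zero hP (by omega)]
    · rw [getLast?_append_right hQdne, getLast?_drop_of_lt hj]
      exact hQ.2.2
  have hQ' : IsNEPathFromTo (Q.take j ++ P.drop i) C B := by
    refine ⟨⟨by simp [hPdne], ?_⟩, ?_, ?_⟩
    · rw [List.Chain', List.isChain_append]
      refine ⟨List.IsChain.take (fromTo_chain hQ) j, List.IsChain.drop (fromTo_chain hP) i, ?_⟩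
      intro a ha b hb
      rcases Nat.eq_zero_or_pos j with hj0 | hj0
      · rw [hj0] at ha
        simp at ha
      · have hne : Q.take j ≠ [] := by
          intro h
          rw [h] at ltakeQ
          simp at ltakeQ
          omega
        rw [List.getLast?_eq_getLast hne, List.getLast_eq_getElem] at ha
        simp only [Option.mem_def, Option.some.injEq] at ha
        rw [dPd] at hb
        simp only [List.head?_cons, Option.mem_def, Option.some.injEq] at hb
        have e1 : (Q.take j)[(Q.take j).length - 1]'(by omega) = Q[j-1]'(by omega) := by
          rw [List.getElem_take]
          congr 1
          omega
        have hstep := chain_step (fromTo_chain hQ) (show (j-1)+1 < Q.length by omega)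
        have e2 : Q[(j-1)+1]'(by omega) = Q[j]'hj := by
          congr 1
          omega
        rw [← ha, e1, ← hb]
        rw [e2, hQj] at hstep
        exact hstep
    · rcases Nat.eq_zero_or_pos j with hj0 | hj0
      · have : Q.take j = [] := by rw [hj0]; simp
        rw [this, List.nil_append, dPd]
        simp only [List.head?_cons]
        have : x = C := by
          rw [← hQj]
          have := fromTo_getElem_zero hQ (by omega)
          rw [← this]
          congr 1
        rw [this]
      · have hne : Q.take j ≠ [] := by
          intro h
          rw [h] at ltakeQ
          simp at ltakeQ
          omega
        rw [List.head?_append_of_ne_nil _ hne]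
        rw [List.head?_eq_head hne]
        have : (Q.take j).head hne = (Q.take j)[0]'(by omega) := by
          rw [List.getElem_zero]
        rw [this]
        have : (Q.take j)[0]'(by omega) = Q[0]'(by omega) := List.getElem_take
        rw [this, fromTo_getElem_zero hQ (by omega)]
    · rw [getLast?_append_right hPdne]
      have : (P.drop i).getLast? = P.getLast? := getLast?_drop_of_lt hi
      rw [this]
      exact hP.2.2
  have hxP' : x ∈ P.take i ++ Q.drop j := by
    rw [dQd]
    simp
  have hxQ' : x ∈ Q.take j ++ P.drop i := by
    rw [dPd]
    simp
  -- involution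
  have hlenP' : (P.take i ++ Q.drop j).length = i + (Q.length - j) := by
    rw [List.length_append, ltake, List.length_drop]
  have hiP' : i < (P.take i ++ Q.drop j).length := by omega
  have hgetP'i : (P.take i ++ Q.drop j)[i]'hiP' = x := by
    rw [List.getElem_append]
    rw [dif_neg (by omega)]
    have : (Q.drop j)[i - (P.take i).length]'(by rw [ltake]; simp [List.length_drop]; omega)
        = (Q.drop j)[0]'(by simp [List.length_drop]; omega) := by
      congr 1
      omega
    rw [this]
    rw [List.getElem_drop]
    exact hQj
  have hgetP'k : ∀ k, (hk : k < i) → (P.take i ++ Q.drop j)[k]'(by omega) = P[k]'(by omega) := by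
    intro k hk
    rw [List.getElem_append]
    rw [dif_pos (by omega)]
    exact List.getElem_take
  have hnotmem : ∀ k, (hk : k < i) → (P[k]'(by omega)) ∉ Q.take j ++ P.drop i := by
    intro k hk
    rw [List.mem_append]
    push_neg
    constructor
    · intro hmem
      exact hmin k hk (List.mem_of_mem_take hmem)
    · intro hmem
      obtain ⟨l, hl, hle⟩ := List.mem_iff_getElem.mp hmem
      rw [List.getElem_drop] at hle
      have s1 := sum_getElem hP (i + l) (by rw [List.length_drop] at hl; omega)
      have s2 := sum_getElem hP k (by omega)
      rw [hle] at s1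
      omega
  have hifix : (P.take i ++ Q.drop j).findIdx (fun z => decide (z ∈ Q.take j ++ P.drop i))
      = i := by
    rw [List.findIdx_eq hiP']
    constructor
    · rw [hgetP'i]
      simpa using hxQ'
    · intro k hk
      rw [hgetP'k k hk]
      simpa using hnotmem k hk
  have hlenQ' : (Q.take j ++ P.drop i).length = j + (P.length - i) := by
    rw [List.length_append, ltakeQ, List.length_drop]
  have hjQ' : j < (Q.take j ++ P.drop i).length := by omega
  have hgetQ'j : (Q.take j ++ P.drop i)[j]'hjQ' = x := by
    rw [List.getElem_append]
    rw [dif_neg (by omega)]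
    have : (P.drop i)[j - (Q.take j).length]'(by rw [ltakeQ]; simp [List.length_drop]; omega)
        = (P.drop i)[0]'(by simp [List.length_drop]; omega) := by
      congr 1
      omega
    rw [this, List.getElem_drop]
    exact hx.symm
  have hjfix : (Q.take j ++ P.drop i).findIdx (fun z => decide (z = x)) = j := by
    rw [List.findIdx_eq hjQ']
    constructor
    · rw [hgetQ'j]
      simp
    · intro k hk
      have : (Q.take j ++ P.drop i)[k]'(by omega) = Q[k]'(by omega) := by
        rw [List.getElem_append, dif_pos (by omega)]
        exact List.getElem_take
      rw [this]
      simpa using hminQ k hk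
  have hinv : swapPair (P.take i ++ Q.drop j, Q.take j ++ P.drop i) = (P, Q) := by
    show ((P.take i ++ Q.drop j).take _ ++ (Q.take j ++ P.drop i).drop _,
      (Q.take j ++ P.drop i).take _ ++ (P.take i ++ Q.drop j).drop _) = (P, Q)
    rw [hifix]
    have hgd : (P.take i ++ Q.drop j).getD i ((0:ℤ),(0:ℤ)) = x := by
      rw [List.getD_eq_getElem _ _ hiP']
      exact hgetP'i
    rw [hgd, hjfix]
    rw [List.take_left' ltake, List.drop_left' ltakeQ,
      List.take_left' ltakeQ, List.drop_left' ltake]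
    rw [List.take_append_drop, List.take_append_drop]
  rw [eswap]
  exact ⟨hP', hQ', ⟨x, hxP', hxQ'⟩, hinv⟩

end LGVAux

namespace LGVAux

def allPairs (p q T U : ℕ) : Set (List Pt × List Pt) :=
  (pathSet ((0:ℤ), -(p:ℤ)) ((T:ℤ), -(T:ℤ))) ×ˢ (pathSet ((0:ℤ), -(q:ℤ)) ((U:ℤ), -(U:ℤ)))

def meetPairs (p q T U : ℕ) : Set (List Pt × List Pt) :=
  allPairs p q T U ∩ {PQ | ∃ z, z ∈ PQ.1 ∧ z ∈ PQ.2}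

def crossPairs (p q T U : ℕ) : Set (List Pt × List Pt) :=
  (pathSet ((0:ℤ), -(p:ℤ)) ((U:ℤ), -(U:ℤ))) ×ˢ (pathSet ((0:ℤ), -(q:ℤ)) ((T:ℤ), -(T:ℤ)))

lemma ncard_prod (s t : Set (List Pt)) : (s ×ˢ t).ncard = s.ncard * t.ncard := by
  rw [← Nat.card_coe_set_eq, ← Nat.card_coe_set_eq, ← Nat.card_coe_set_eq]
  rw [Nat.card_congr (Equiv.Set.prod s t), Nat.card_prod]

lemma swap_maps_meet (p q T U : ℕ) :
    ∀ PQ ∈ meetPairs p q T U, swapPair PQ ∈ crossPairs p q T U ∧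
      swapPair (swapPair PQ) = PQ := by
  rintro ⟨P, Q⟩ ⟨⟨h1, h2⟩, hm⟩
  have hs := swap_spec h1 h2 hm
  exact ⟨⟨hs.1, hs.2.1⟩, hs.2.2.2⟩

lemma swap_maps_cross (p q T U : ℕ) (hpq : p < q) (hTU : T < U) :
    ∀ PQ ∈ crossPairs p q T U, swapPair PQ ∈ meetPairs p q T U ∧
      swapPair (swapPair PQ) = PQ := by
  rintro ⟨P, Q⟩ ⟨h1, h2⟩
  have hm := must_meet h1 h2 hpq hTU
  have hs := swap_spec h1 h2 hm
  exact ⟨⟨⟨hs.1, hs.2.1⟩, hs.2.2.1⟩, hs.2.2.2⟩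

lemma ncard_meet_eq_cross (p q T U : ℕ) (hpq : p < q) (hTU : T < U) :
    (meetPairs p q T U).ncard = (crossPairs p q T U).ncard := by
  have himg : swapPair '' meetPairs p q T U = crossPairs p q T U := by
    ext y
    constructor
    · rintro ⟨x, hx, rfl⟩
      exact (swap_maps_meet p q T U x hx).1
    · intro hy
      exact ⟨swapPair y, (swap_maps_cross p q T U hpq hTU y hy).1,
        (swap_maps_cross p q T U hpq hTU y hy).2⟩
  have hinj : Set.InjOn swapPair (meetPairs p q T U) := by
    intro x hx y hy hxy
    rw [← (swap_maps_meet p q T U x hx).2, ← (swap_maps_meet p q T U y hy).2, hxy]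
  rw [← himg, Set.ncard_image_of_injOn hinj]

lemma lgv_eq (p q T U : ℕ) (hpq : p < q) (hTU : T < U) :
    (latticePathPairs (p:ℤ) (q:ℤ) (T:ℤ) (U:ℤ)).ncard
      + Nat.choose p U * Nat.choose q T = Nat.choose p T * Nat.choose q U := by
  have hfinall : (allPairs p q T U).Finite :=
    Set.Finite.prod (pathSet_finite _ _) (pathSet_finite _ _)
  have hL : latticePathPairs (p:ℤ) (q:ℤ) (T:ℤ) (U:ℤ) ⊆ allPairs p q T U := by
    rintro ⟨P, Q⟩ ⟨h1, h2, h3⟩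
    exact ⟨h1, h2⟩
  have hM : meetPairs p q T U ⊆ allPairs p q T U := Set.inter_subset_left
  have hunion : latticePathPairs (p:ℤ) (q:ℤ) (T:ℤ) (U:ℤ) ∪ meetPairs p q T U
      = allPairs p q T U := by
    ext PQ
    constructor
    · rintro (h | h)
      · exact hL h
      · exact hM h
    · intro h
      by_cases hm : ∃ z, z ∈ PQ.1 ∧ z ∈ PQ.2
      · exact Or.inr ⟨h, hm⟩
      · exact Or.inl ⟨h.1, h.2, fun x hx hx2 => hm ⟨x, hx, hx2⟩⟩
  have hdisj : Disjoint (latticePathPairs (p:ℤ) (q:ℤ) (T:ℤ) (U:ℤ)) (meetPairs p q T U) := by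
    rw [Set.disjoint_left]
    rintro PQ ⟨h1, h2, h3⟩ ⟨hall, z, hz1, hz2⟩
    exact h3 z hz1 hz2
  have hall : (allPairs p q T U).ncard = Nat.choose p T * Nat.choose q U := by
    rw [allPairs, ncard_prod, pathSet_count, pathSet_count]
  have hcross : (crossPairs p q T U).ncard = Nat.choose p U * Nat.choose q T := by
    rw [crossPairs, ncard_prod, pathSet_count, pathSet_count]
  rw [← hall, ← hunion,
    Set.ncard_union_eq hdisj (hfinall.subset hL) (hfinall.subset hM),
    ncard_meet_eq_cross p q T U hpq hTU, hcross]

end LGVAux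


set_option maxHeartbeats 1000000 in
open LGVAux in
/-- With `ã = d+1-a`, `r̄ = d-r`, `s̄ = d-s`, one has
`#L(a, a+1; s̄, r̄) + #L(a+1, ã; s̄, r̄) ≤ #L(a, ã−1; s̄, r̄) + #L(ã−1, ã; s̄, r̄)`. -/
theorem lattice_path_count_le (d : ℕ) (hd : 3 ≤ d) (a r s : ℕ)
    (ha : a < d / 2) (hrs : r < s) (hs : s ≤ d - 1) :
    (latticePathPairs (a : ℤ) ((a : ℤ) + 1) ((d : ℤ) - s) ((d : ℤ) - r)).ncard +
      (latticePathPairs ((a : ℤ) + 1) ((d : ℤ) + 1 - a) ((d : ℤ) - s) ((d : ℤ) - r)).ncard ≤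
    (latticePathPairs (a : ℤ) ((d : ℤ) + 1 - a - 1) ((d : ℤ) - s) ((d : ℤ) - r)).ncard +
      (latticePathPairs ((d : ℤ) + 1 - a - 1) ((d : ℤ) + 1 - a) ((d : ℤ) - s) ((d : ℤ) - r)).ncard := by
  set T := d - s with hT
  set U := d - r with hU
  set b := d - a with hb
  have e4 : (d:ℤ) + 1 - a - 1 = ((b:ℕ):ℤ) := by omega
  have e3 : (d:ℤ) + 1 - a = (((b+1 : ℕ)):ℤ) := by omega
  have e1 : (d:ℤ) - s = ((T:ℕ):ℤ) := by omega
  have e2 : (d:ℤ) - r = ((U:ℕ):ℤ) := by omega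
  have e5 : (a:ℤ) + 1 = (((a+1:ℕ)):ℤ) := by omega
  rw [e4, e3, e1, e2, e5]
  have g1 := lgv_eq a (a+1) T U (by omega) (by omega)
  have g2 := lgv_eq (a+1) (b+1) T U (by omega) (by omega)
  have g3 := lgv_eq a b T U (by omega) (by omega)
  have g4 := lgv_eq b (b+1) T U (by omega) (by omega)
  have hkey := main_ineq a b T U (by omega) (by omega) (by omega)
  rw [← Nat.cast_le (α := ℤ)]
  push_cast
  have g1' := congrArg (fun n : ℕ => (n:ℤ)) g1
  have g2' := congrArg (fun n : ℕ => (n:ℤ)) g2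
  have g3' := congrArg (fun n : ℕ => (n:ℤ)) g3
  have g4' := congrArg (fun n : ℕ => (n:ℤ)) g4
  push_cast at g1' g2' g3' g4'
  nlinarith [hkey, g1', g2', g3', g4']
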